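/- Let {a_i mod n_i}_{i=1}^k be an exact covering system of ℤ with not all moduli equal. Then each modulus n_i occurs at least min{ G(n_i / gcd(n_i, n_j)) : n_j ≠ n_i } times, where G(n) = max{ p^r : p prime, r ≥ 0, p^r ∣ n }. -/

import Mathlib

open Finset

/-- `G n` is the largest prime power dividing `n` (with `G 1 = 1`). -/
def G (n : ℕ) : ℕ := max 1 ((n.divisors.filter IsPrimePow).sup id)

lemma one_le_G (n : ℕ) : 1 ≤ G n := le_max_left _ _

lemma G_cases (n : ℕ) : G n = 1 ∨ (IsPrimePow (G n) ∧ G n ∣ n) := by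
  rcases (n.divisors.filter IsPrimePow).eq_empty_or_nonempty with h | h
  · left; simp [G, h]
  · right
    obtain ⟨q, hq, hsup⟩ := Finset.exists_mem_eq_sup _ h id
    simp only [Finset.mem_filter, Nat.mem_divisors] at hq
    have h2 : 2 ≤ q := hq.2.two_le
    have hG : G n = q := by simp only [G, hsup, id]; omega
    rw [hG]; exact ⟨hq.2, hq.1.1⟩

lemma le_G {q n : ℕ} (hn : n ≠ 0) (hq : IsPrimePow q) (h : q ∣ n) : q ≤ G n := by
  refine le_trans ?_ (le_max_right _ _)
  exact Finset.le_sup (f := id) (by simp [Nat.mem_divisors, h, hn, hq])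

lemma G_le {n : ℕ} (hn : n ≠ 0) : G n ≤ n := by
  have h1 : 1 ≤ n := Nat.one_le_iff_ne_zero.2 hn
  refine max_le h1 (Finset.sup_le fun q hq => ?_)
  simp only [mem_filter, Nat.mem_divisors] at hq
  exact Nat.le_of_dvd (Nat.pos_of_ne_zero hn) hq.1.1

lemma G_prime_pow {p : ℕ} (hp : p.Prime) (e : ℕ) : G (p ^ e) = p ^ e := by
  rcases Nat.eq_zero_or_pos e with rfl | he
  · simp only [pow_zero]
    have : (Nat.divisors 1).filter IsPrimePow = ∅ := by
      rw [Nat.divisors_one]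
      simp [Finset.filter_singleton, not_isPrimePow_one]
    simp [G, this]
  · refine le_antisymm (G_le (pow_ne_zero _ hp.pos.ne')) (le_G (pow_ne_zero _ hp.pos.ne') ?_ dvd_rfl)
    exact ⟨p, e, hp.prime, he, rfl⟩

lemma G_mul {a b : ℕ} (ha : a ≠ 0) (hb : b ≠ 0) (hab : Nat.Coprime a b) :
    G (a * b) = max (G a) (G b) := by
  have hab0 : a * b ≠ 0 := mul_ne_zero ha hb
  apply le_antisymm
  · rcases G_cases (a * b) with h | ⟨hpp, hdvd⟩
    · rw [h]; exact le_trans (one_le_G a) (le_max_left _ _)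
    · obtain ⟨p, c, hpP, hc, hq⟩ := hpp
      have hp : p.Prime := Nat.prime_iff.mpr hpP
      have hpdvd : p ∣ G (a * b) := by rw [← hq]; exact dvd_pow_self p hc.ne'
      rcases (hp.dvd_mul).1 (hpdvd.trans hdvd) with hpa | hpb
      · have hpb : ¬ p ∣ b := fun hpb => hp.one_lt.ne' (Nat.eq_one_of_dvd_coprimes hab hpa hpb ▸ rfl)
        have hcop : Nat.Coprime (G (a * b)) b := by
          rw [← hq]; exact Nat.Coprime.pow_left _ (hp.coprime_iff_not_dvd.2 hpb)
        exact le_max_of_le_left (le_G ha ⟨p, c, hpP, hc, hq⟩ (hcop.dvd_of_dvd_mul_right hdvd))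
      · have hpa : ¬ p ∣ a := fun hpa => hp.one_lt.ne' (Nat.eq_one_of_dvd_coprimes hab hpa hpb ▸ rfl)
        have hcop : Nat.Coprime (G (a * b)) a := by
          rw [← hq]; exact Nat.Coprime.pow_left _ (hp.coprime_iff_not_dvd.2 hpa)
        exact le_max_of_le_right (le_G hb ⟨p, c, hpP, hc, hq⟩ (hcop.dvd_of_dvd_mul_left hdvd))
  · refine max_le ?_ ?_
    · rcases G_cases a with h | ⟨hpp, hdvd⟩
      · rw [h]; exact one_le_G _
      · exact le_G hab0 hpp (hdvd.mul_right b)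
    · rcases G_cases b with h | ⟨hpp, hdvd⟩
      · rw [h]; exact one_le_G _
      · exact le_G hab0 hpp (hdvd.mul_left a)

lemma key {k : ℕ} : ∀ (K : ℕ) (T : Finset (Fin k)), T.card ≤ K →
    ∀ (n : ℕ) (hnz : NeZero n) (g : Fin k → ℕ), (∀ j ∈ T, g j ∣ n) →
    ∀ (q : Fin k → ZMod n → ℚ),
    (∀ j ∈ T, ∀ x : ZMod n, ∀ m : ℕ, q j (x + ((m * g j : ℕ) : ZMod n)) = q j x) →
    ∀ (f : ZMod n → ℤ), (∀ x, (f x : ℚ) = ∑ j ∈ T, q j x) → f ≠ 0 →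
    ∃ j ∈ T, G (n / g j) ≤ ∑ x : ZMod n, (f x).natAbs := by
  intro K
  induction K with
  | zero =>
    intro T hT n hnz g hg q hq f hf hf0
    have hTe : T = ∅ := Finset.card_eq_zero.1 (Nat.le_zero.1 hT)
    subst hTe
    refine absurd (funext fun x => ?_) hf0
    have := hf x
    simp only [Finset.sum_empty] at this
    exact_mod_cast this
  | succ K ih =>
    intro T hT n hnz g hg q hq f hf hf0
    by_contra hcon
    push_neg at hcon
    set F := ∑ x : ZMod n, (f x).natAbs with hF
    obtain ⟨x₀, hx₀⟩ : ∃ x, f x ≠ 0 := by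
      by_contra h; push_neg at h; exact hf0 (funext h)
    have hFx₀ : 1 ≤ (f x₀).natAbs := by
      rcases Int.natAbs_eq_zero.not.2 hx₀ with h
      omega
    have hF1 : 1 ≤ F := le_trans hFx₀ (Finset.single_le_sum (f := fun x => (f x).natAbs)
      (fun _ _ => Nat.zero_le _) (mem_univ x₀))
    have hTne : T.Nonempty := by
      rcases T.eq_empty_or_nonempty with rfl | h
      · exact absurd ((Int.cast_eq_zero (α := ℚ)).1 (by simpa using hf x₀)) hx₀
      · exact h
    obtain ⟨j₀, hj₀T⟩ := hTne
    have hn0 : n ≠ 0 := hnz.out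
    have hnpos : 0 < n := Nat.pos_of_ne_zero hn0
    have hgj0 : ∀ j ∈ T, g j ≠ 0 := by
      intro j hj h0
      have := hg j hj
      rw [h0] at this
      exact hn0 (Nat.eq_zero_of_zero_dvd this)
    have hngj0 : ∀ j ∈ T, n / g j ≠ 0 := fun j hj =>
      (Nat.div_pos (Nat.le_of_dvd hnpos (hg j hj)) (Nat.pos_of_ne_zero (hgj0 j hj))).ne'
    have hG2 : 2 ≤ G (n / g j₀) := by have := hcon j₀ hj₀T; omega
    obtain ⟨hpp, hGdvd⟩ : IsPrimePow (G (n / g j₀)) ∧ G (n / g j₀) ∣ n / g j₀ := by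
      rcases G_cases (n / g j₀) with h | h
      · omega
      · exact h
    obtain ⟨p, c, hpP, hc, hpc⟩ := hpp
    have hp : p.Prime := Nat.prime_iff.mpr hpP
    set t := n.factorization p with ht
    set v : Fin k → ℕ := fun j => (g j).factorization p with hv
    set n₂ := n / p ^ t with hn₂def
    have hn2pos : 0 < n₂ := Nat.ordCompl_pos p hn0
    have hmul : p ^ t * n₂ = n := Nat.ordProj_mul_ordCompl_eq_self n p
    have hpn2 : ¬ p ∣ n₂ := Nat.not_dvd_ordCompl hp hn0
    set h : Fin k → ℕ := fun j => g j / p ^ v j with hh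
    have hvt : ∀ j ∈ T, v j ≤ t := by
      intro j hj
      exact (Nat.factorization_le_iff_dvd (hgj0 j hj) hn0).2 (hg j hj) p
    have hgfac : ∀ j, p ^ v j * h j = g j := fun j =>
      Nat.ordProj_mul_ordCompl_eq_self (g j) p
    have hhn2 : ∀ j ∈ T, h j ∣ n₂ := fun j hj =>
      Nat.ordCompl_dvd_ordCompl_of_dvd (hg j hj) p
    -- j₀ belongs to J₁
    have hfacj₀ : F < p ^ (t - v j₀) := by
      have hcle : c ≤ (n / g j₀).factorization p := by
        rw [← Nat.Prime.pow_dvd_iff_le_factorization hp (hngj0 j₀ hj₀T)]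
        rw [hpc]; exact hGdvd
      have hfd : (n / g j₀).factorization p = t - v j₀ := by
        rw [Nat.factorization_div (hg j₀ hj₀T)]
        simp [ht, hv]
      have h1 : p ^ c ≤ p ^ (t - v j₀) := by
        apply Nat.pow_le_pow_right hp.pos; omega
      have h2 : F < p ^ c := by rw [hpc] at *; exact hcon j₀ hj₀T
      omega
    set J₁ := T.filter (fun j => F < p ^ (t - v j)) with hJ₁
    have hj₀J₁ : j₀ ∈ J₁ := mem_filter.2 ⟨hj₀T, hfacj₀⟩
    set V := J₁.sup v with hV
    have hVle : ∀ j ∈ J₁, v j ≤ V := fun j hj => Finset.le_sup hj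
    obtain ⟨js, hjs, hVeq⟩ := Finset.exists_mem_eq_sup J₁ ⟨j₀, hj₀J₁⟩ v
    have hFpV : F < p ^ (t - V) := by rw [hV, hVeq]; exact (mem_filter.1 hjs).2
    have hVt : V < t := by
      by_contra hc'
      push_neg at hc'
      rw [Nat.sub_eq_zero_of_le hc', pow_zero] at hFpV
      omega
    set δ : ZMod n := ((p ^ V * n₂ : ℕ) : ZMod n) with hδ
    have hδperiod : ∀ j ∈ J₁, ∀ x : ZMod n, q j (x + δ) = q j x := by
      intro j hj x
      have hjT : j ∈ T := (mem_filter.1 hj).1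
      have h1 : (p ^ (V - v j) * (n₂ / h j)) * g j = p ^ V * n₂ := by
        rw [← hgfac j]
        have e1 : n₂ / h j * h j = n₂ := Nat.div_mul_cancel (hhn2 j hjT)
        have e2 : p ^ (V - v j) * p ^ v j = p ^ V := by
          rw [← pow_add]; congr 1; have := hVle j hj; omega
        calc p ^ (V - v j) * (n₂ / h j) * (p ^ v j * h j)
            = (p ^ (V - v j) * p ^ v j) * (n₂ / h j * h j) := by ring
          _ = p ^ V * n₂ := by rw [e1, e2]
      have := hq j hjT x (p ^ (V - v j) * (n₂ / h j))
      rwa [h1] at this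
    have horder : addOrderOf δ = p ^ (t - V) := by
      rw [hδ, ZMod.addOrderOf_coe]
      have hdvd : p ^ V * n₂ ∣ n := by
        refine ⟨p ^ (t - V), ?_⟩
        rw [← hmul]
        have : p ^ V * p ^ (t - V) = p ^ t := by
          rw [← pow_add]; congr 1; omega
        calc p ^ t * n₂ = (p ^ V * p ^ (t - V)) * n₂ := by rw [this]
          _ = p ^ V * n₂ * p ^ (t - V) := by ring
      rw [Nat.gcd_eq_right hdvd]
      rw [← hmul]
      have hne' : p ^ V * n₂ ≠ 0 := Nat.mul_ne_zero (pow_ne_zero _ hp.pos.ne') hn2pos.ne' 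
      rw [show p ^ t * n₂ = (p ^ V * n₂) * p ^ (t - V) by
        rw [show (p ^ V * n₂) * p ^ (t - V) = (p ^ V * p ^ (t-V)) * n₂ by ring, ← pow_add]
        congr 2; omega]
      exact Nat.mul_div_cancel_left _ (Nat.pos_of_ne_zero hne')
      exact hn0
    by_cases hΔ : ∀ x : ZMod n, f (x + δ) = f x
    · -- Case 1 : f is δ-periodic
      have hper : ∀ u : ℕ, f (x₀ + u • δ) = f x₀ := by
        intro u
        induction u with
        | zero => simp
        | succ u ihu =>
          rw [succ_nsmul, ← add_assoc, hΔ, ihu]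
      have hinj : ∀ u ∈ Finset.range (p ^ (t - V)), ∀ u' ∈ Finset.range (p ^ (t - V)),
          x₀ + u • δ = x₀ + u' • δ → u = u' := by
        have haux : ∀ u u' : ℕ, u ≤ u' → u' < p ^ (t - V) → u • δ = u' • δ → u = u' := by
          intro u u' huu hub he
          have h1 : (u' - u) • δ = 0 := by
            rw [sub_nsmul δ huu, he]; simp
          have h2 : p ^ (t - V) ∣ u' - u := horder ▸ addOrderOf_dvd_of_nsmul_eq_zero h1
          rcases Nat.eq_zero_or_pos (u' - u) with h3 | h3
          · omega
          · have := Nat.le_of_dvd h3 h2; omega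
        intro u hu u' hu' he
        have he' : u • δ = u' • δ := by
          have := he; rwa [add_right_inj] at this
        simp only [Finset.mem_range] at hu hu'
        rcases le_total u u' with h4 | h4
        · exact haux u u' h4 hu' he'
        · exact (haux u' u h4 hu he'.symm).symm
      have e1 : ∑ u ∈ Finset.range (p ^ (t - V)), (f (x₀ + u • δ)).natAbs
          = p ^ (t - V) * (f x₀).natAbs := by
        rw [Finset.sum_congr rfl (fun u _ => by rw [hper u])]
        rw [Finset.sum_const, card_range, smul_eq_mul]
      have e2 : ∑ u ∈ Finset.range (p ^ (t - V)), (f (x₀ + u • δ)).natAbs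
          = ∑ x ∈ (Finset.range (p ^ (t - V))).image (fun u => x₀ + u • δ), (f x).natAbs :=
        (Finset.sum_image (f := fun x => (f x).natAbs) hinj).symm
      have e3 : ∑ x ∈ (Finset.range (p ^ (t - V))).image (fun u => x₀ + u • δ),
          (f x).natAbs ≤ F := by
        rw [hF]
        exact Finset.sum_le_sum_of_subset (Finset.subset_univ _)
      have e4 : p ^ (t - V) ≤ p ^ (t - V) * (f x₀).natAbs :=
        Nat.le_mul_of_pos_right _ (by omega)
      omega
    · -- Case 2
      push_neg at hΔ
      obtain ⟨z₀, hz₀⟩ := hΔ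
      have hn2nz : NeZero n₂ := ⟨hn2pos.ne'⟩
      set em : ZMod n₂ → ZMod n := fun y => ((p ^ t * y.val : ℕ) : ZMod n) with hem
      have ec : ∀ a b : ℕ, a ≡ b [MOD n₂] →
          ((p ^ t * a : ℕ) : ZMod n) = ((p ^ t * b : ℕ) : ZMod n) := by
        intro a b hab
        have h1 : p ^ t * a ≡ p ^ t * b [MOD p ^ t * n₂] := hab.mul_left' _
        rw [hmul] at h1
        exact (ZMod.natCast_eq_natCast_iff _ _ _).2 h1
      have emadd : ∀ (y : ZMod n₂) (cn : ℕ),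
          em (y + (cn : ZMod n₂)) = em y + ((p ^ t * cn : ℕ) : ZMod n) := by
        intro y cn
        have h1 : (y + (cn : ZMod n₂)).val ≡ y.val + cn [MOD n₂] := by
          calc (y + (cn : ZMod n₂)).val
              = (y.val + (cn : ZMod n₂).val) % n₂ := ZMod.val_add y _
            _ ≡ y.val + (cn : ZMod n₂).val [MOD n₂] := Nat.mod_modEq _ _
            _ ≡ y.val + cn [MOD n₂] := by
                rw [ZMod.val_natCast]
                exact Nat.ModEq.add_left _ (Nat.mod_modEq _ _)
        calc em (y + (cn : ZMod n₂)) = ((p ^ t * (y + (cn : ZMod n₂)).val : ℕ) : ZMod n) := rfl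
          _ = ((p ^ t * (y.val + cn) : ℕ) : ZMod n) := ec _ _ h1
          _ = em y + ((p ^ t * cn : ℕ) : ZMod n) := by
              rw [Nat.mul_add, Nat.cast_add]
      set w : ZMod n₂ → ℤ := fun y => f (z₀ + δ + em y) - f (z₀ + em y) with hw
      set q' : Fin k → ZMod n₂ → ℚ :=
        fun j y => q j (z₀ + δ + em y) - q j (z₀ + em y) with hq'def
      set T' := T \ J₁ with hT'
      set g' : Fin k → ℕ := fun j => g j / p ^ v j with hg'def
      have hsub : T' ⊆ T := Finset.sdiff_subset
      have hj₀T' : j₀ ∉ T' := fun hmem => (Finset.mem_sdiff.1 hmem).2 hj₀J₁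
      have hcard' : T'.card ≤ K := by
        have h1 : T'.card < T.card :=
          Finset.card_lt_card ⟨Finset.sdiff_subset, fun hsub' => hj₀T' (hsub' hj₀T)⟩
        omega
      have hg' : ∀ j ∈ T', g' j ∣ n₂ := fun j hj => hhn2 j (hsub hj)
      have hq' : ∀ j ∈ T', ∀ (y : ZMod n₂) (m : ℕ),
          q' j (y + ((m * g' j : ℕ) : ZMod n₂)) = q' j y := by
        intro j hj y m
        have hjT := hsub hj
        have h1 : p ^ t * (m * g' j) = (m * p ^ (t - v j)) * g j := by
          rw [← hgfac j]
          have e2 : p ^ (t - v j) * p ^ v j = p ^ t := by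
            rw [← pow_add]; congr 1; have := hvt j hjT; omega
          calc p ^ t * (m * g' j) = m * (p ^ (t - v j) * p ^ v j) * g' j := by rw [e2]; ring
            _ = (m * p ^ (t - v j)) * (p ^ v j * g' j) := by ring
        simp only [hq'def]
        rw [emadd y (m * g' j), h1]
        rw [show z₀ + δ + (em y + (((m * p ^ (t - v j)) * g j : ℕ) : ZMod n))
            = (z₀ + δ + em y) + (((m * p ^ (t - v j)) * g j : ℕ) : ZMod n) by ring]
        rw [show z₀ + (em y + (((m * p ^ (t - v j)) * g j : ℕ) : ZMod n))
            = (z₀ + em y) + (((m * p ^ (t - v j)) * g j : ℕ) : ZMod n) by ring]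
        rw [hq j hjT _ (m * p ^ (t - v j)), hq j hjT _ (m * p ^ (t - v j))]
      have hfw : ∀ y, ((w y : ℤ) : ℚ) = ∑ j ∈ T', q' j y := by
        intro y
        simp only [hw, hq'def, Int.cast_sub]
        rw [hf, hf]
        rw [← Finset.sum_sub_distrib]
        have hJT : J₁ ⊆ T := Finset.filter_subset _ _
        rw [← Finset.sum_sdiff hJT]
        have hzero : ∑ j ∈ J₁, (q j (z₀ + δ + em y) - q j (z₀ + em y)) = 0 := by
          refine Finset.sum_eq_zero fun j hj => ?_
          rw [show z₀ + δ + em y = (z₀ + em y) + δ by ring, hδperiod j hj, sub_self]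
        rw [hzero, add_zero]
      have hw0 : w ≠ 0 := by
        intro hweq
        apply hz₀
        have h0 : em 0 = 0 := by
          simp [hem, ZMod.val_zero]
        have := congrFun hweq 0
        simp only [hw, h0, add_zero, Pi.zero_apply] at this
        omega
      have eminj : Function.Injective em := by
        intro y y' hyy
        have hmod : p ^ t * y.val ≡ p ^ t * y'.val [MOD n] :=
          (ZMod.natCast_eq_natCast_iff _ _ _).1 hyy
        have hdvd : (n₂ : ℤ) ∣ (y'.val : ℤ) - y.val := by
          have h1 : ((p ^ t * n₂ : ℕ) : ℤ) ∣ ((p ^ t * y'.val : ℕ) : ℤ) - ((p ^ t * y.val : ℕ) : ℤ) := by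
            rw [hmul]; exact hmod.dvd
          have h2 : ((p : ℤ) ^ t) * n₂ ∣ ((p : ℤ) ^ t) * ((y'.val : ℤ) - y.val) := by
            push_cast at h1
            convert h1 using 1; ring
          exact (mul_dvd_mul_iff_left (a := (p : ℤ) ^ t)
            (pow_ne_zero _ (by exact_mod_cast hp.pos.ne'))).1 h2
        have hmod2 : y.val ≡ y'.val [MOD n₂] := by
          rw [Nat.modEq_iff_dvd]
          exact_mod_cast hdvd
        have hy : (y.val : ZMod n₂) = (y'.val : ZMod n₂) :=
          (ZMod.natCast_eq_natCast_iff _ _ _).2 hmod2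
        rwa [ZMod.natCast_val, ZMod.natCast_val, ZMod.cast_id, ZMod.cast_id] at hy
      have hmulz : ∀ y : ZMod n₂, (n₂ : ZMod n) * em y = 0 := by
        intro y
        simp only [hem]
        rw [← Nat.cast_mul]
        rw [show n₂ * (p ^ t * y.val) = n * y.val by rw [← hmul]; ring]
        rw [Nat.cast_mul, ZMod.natCast_self, zero_mul]
      have hn2δ : (n₂ : ZMod n) * δ ≠ 0 := by
        rw [hδ, ← Nat.cast_mul, Ne, ZMod.natCast_eq_zero_iff]
        intro hdvd
        rw [show n₂ * (p ^ V * n₂) = (p ^ V * n₂) * n₂ by ring, ← hmul] at hdvd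
        rw [show p ^ t * n₂ = (p ^ V * n₂) * p ^ (t - V) by
          rw [show (p ^ V * n₂) * p ^ (t - V) = (p ^ V * p ^ (t - V)) * n₂ by ring, ← pow_add]
          congr 2; omega] at hdvd
        have h1 : p ^ (t - V) ∣ n₂ :=
          (Nat.mul_dvd_mul_iff_left (Nat.pos_of_ne_zero
            (Nat.mul_ne_zero (pow_ne_zero _ hp.pos.ne') hn2pos.ne'))).1 hdvd
        exact hpn2 ((dvd_pow_self p (by omega : t - V ≠ 0)).trans h1)
      have hinj1 : ∀ u ∈ (univ : Finset (ZMod n₂)), ∀ u' ∈ (univ : Finset (ZMod n₂)),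
          z₀ + δ + em u = z₀ + δ + em u' → u = u' := by
        intro u _ u' _ he
        exact eminj (by rwa [add_right_inj] at he)
      have hinj2 : ∀ u ∈ (univ : Finset (ZMod n₂)), ∀ u' ∈ (univ : Finset (ZMod n₂)),
          z₀ + em u = z₀ + em u' → u = u' := by
        intro u _ u' _ he
        exact eminj (by rwa [add_right_inj] at he)
      have hdisj : Disjoint ((univ : Finset (ZMod n₂)).image (fun y => z₀ + δ + em y))
          ((univ : Finset (ZMod n₂)).image (fun y => z₀ + em y)) := by
        rw [Finset.disjoint_left]
        rintro x hx hx'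
        simp only [Finset.mem_image, Finset.mem_univ, true_and] at hx hx'
        obtain ⟨y, hy⟩ := hx
        obtain ⟨y', hy'⟩ := hx'
        have he : δ + em y = em y' := by
          have := hy.trans hy'.symm
          rw [show z₀ + δ + em y = z₀ + (δ + em y) by ring] at this
          rwa [add_right_inj] at this
        apply hn2δ
        have h2 := congrArg (fun z => (n₂ : ZMod n) * z) he
        simp only [mul_add, hmulz, add_zero] at h2
        exact h2
      have hsum' : ∑ y : ZMod n₂, (w y).natAbs ≤ F := by
        have s1 : ∑ y : ZMod n₂, (w y).natAbs ≤
            ∑ y : ZMod n₂, ((f (z₀ + δ + em y)).natAbs + (f (z₀ + em y)).natAbs) :=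
          Finset.sum_le_sum fun y _ => Int.natAbs_sub_le _ _
        have s2 : ∑ y : ZMod n₂, ((f (z₀ + δ + em y)).natAbs + (f (z₀ + em y)).natAbs)
            = ∑ x ∈ (univ : Finset (ZMod n₂)).image (fun y => z₀ + δ + em y), (f x).natAbs
              + ∑ x ∈ (univ : Finset (ZMod n₂)).image (fun y => z₀ + em y), (f x).natAbs := by
          rw [Finset.sum_add_distrib, Finset.sum_image (f := fun x => (f x).natAbs) hinj1,
            Finset.sum_image (f := fun x => (f x).natAbs) hinj2]
        have s3 : ∑ x ∈ (univ : Finset (ZMod n₂)).image (fun y => z₀ + δ + em y), (f x).natAbs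
              + ∑ x ∈ (univ : Finset (ZMod n₂)).image (fun y => z₀ + em y), (f x).natAbs
            = ∑ x ∈ ((univ : Finset (ZMod n₂)).image (fun y => z₀ + δ + em y)
                ∪ (univ : Finset (ZMod n₂)).image (fun y => z₀ + em y)), (f x).natAbs :=
          (Finset.sum_union hdisj).symm
        have s4 : ∑ x ∈ ((univ : Finset (ZMod n₂)).image (fun y => z₀ + δ + em y)
                ∪ (univ : Finset (ZMod n₂)).image (fun y => z₀ + em y)), (f x).natAbs ≤ F := by
          rw [hF]
          exact Finset.sum_le_sum_of_subset (Finset.subset_univ _)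
        omega
      obtain ⟨j, hjT', hGle⟩ := ih T' hcard' n₂ hn2nz g' hg' q' hq' w hfw hw0
      have hjT := hsub hjT'
      have hnotJ : ¬ F < p ^ (t - v j) := by
        have := (Finset.mem_sdiff.1 hjT').2
        intro hlt
        exact this (Finset.mem_filter.2 ⟨hjT, hlt⟩)
      have hsplit : n / g j = p ^ (t - v j) * (n₂ / g' j) := by
        rw [← hmul, ← hgfac j]
        rw [← Nat.div_mul_div_comm (pow_dvd_pow p (hvt j hjT)) (hhn2 j hjT)]
        rw [Nat.pow_div (hvt j hjT) hp.pos]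
      have hg'dvd : g' j ∣ n₂ := hhn2 j hjT
      have hn2g'pos : n₂ / g' j ≠ 0 := by
        have h0 : g' j ≠ 0 := by
          intro h0
          rw [h0, Nat.zero_dvd] at hg'dvd
          omega
        exact (Nat.div_pos (Nat.le_of_dvd hn2pos hg'dvd) (Nat.pos_of_ne_zero h0)).ne'
      have hcop : Nat.Coprime (p ^ (t - v j)) (n₂ / g' j) := by
        apply Nat.Coprime.pow_left
        apply hp.coprime_iff_not_dvd.2
        intro hpd
        exact hpn2 (hpd.trans (Nat.div_dvd_of_dvd hg'dvd))
      have hfinal : G (n / g j) ≤ F := by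
        rw [hsplit, G_mul (pow_ne_zero _ hp.pos.ne') hn2g'pos hcop, G_prime_pow hp]
        exact max_le (by omega) (le_trans hGle hsum')
      exact absurd (hcon j hjT) (not_lt.2 hfinal)

/-- In an exact covering system of `ℤ` with not all moduli equal, each modulus
`n i` occurs at least `min { G (n i / gcd (n i) (n j)) : n j ≠ n i }` times. -/
theorem exact_cover_modulus_repeats {k : ℕ}
    (a : Fin k → ℤ) (n : Fin k → ℕ) (hn : ∀ i, 2 ≤ n i)
    (hcover : ∀ x : ℤ, ∃! i : Fin k, (n i : ℤ) ∣ x - a i)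
    (hne : ∃ i j : Fin k, n i ≠ n j) :
    ∀ i : Fin k,
      sInf {m : ℕ | ∃ j : Fin k, n j ≠ n i ∧ m = G (n i / Nat.gcd (n i) (n j))} ≤
        Nat.card {j : Fin k // n j = n i} := by
  intro i
  classical
  set N := n i with hN
  have hN2 : 2 ≤ N := hn i
  haveI hNz : NeZero N := ⟨by omega⟩
  set L := N * ∏ j : Fin k, n j with hLdef
  have hL0 : 0 < L := by
    refine Nat.mul_pos (by omega) (Finset.prod_pos fun j _ => by have := hn j; omega)
  haveI hLz : NeZero L := ⟨hL0.ne'⟩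
  have hNL : N ∣ L := dvd_mul_right _ _
  have hjL : ∀ j, (n j : ℕ) ∣ L := fun j =>
    Dvd.dvd.mul_left (Finset.dvd_prod_of_mem _ (mem_univ j)) N
  set φ : ZMod L →+* ZMod N := ZMod.castHom hNL (ZMod N) with hφ
  set cnt : Fin k → ZMod N → ℕ := fun j b =>
    (univ.filter (fun z : ZMod L => φ z = b ∧ (n j : ℤ) ∣ (z.val : ℤ) - a j)).card with hcnt
  set fib : ZMod N → ℕ := fun b => (univ.filter (fun z : ZMod L => φ z = b)).card with hfib
  set fN : ZMod N → ℕ := fun b =>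
    (univ.filter (fun j : Fin k => n j = N ∧ ((a j : ℤ) : ZMod N) = b)).card with hfN
  -- (A) fibers are constant
  have hφnat : ∀ m : ℕ, φ ((m : ZMod L)) = (m : ZMod N) := fun m => map_natCast φ m
  have hφval : ∀ b : ZMod N, φ ((b.val : ZMod L)) = b := by
    intro b
    rw [hφnat, ZMod.natCast_val, ZMod.cast_id]
  have hfibconst : ∀ b : ZMod N, fib b = fib 0 := by
    intro b
    apply Finset.card_bij' (i := fun z _ => z - (b.val : ZMod L)) (j := fun z _ => z + (b.val : ZMod L))
    · intro z hz
      simp only [hfib, mem_filter, mem_univ, true_and] at hz ⊢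
      rw [map_sub, hz, hφval, sub_self]
    · intro z hz
      simp only [hfib, mem_filter, mem_univ, true_and] at hz ⊢
      rw [map_add, hz, hφval, zero_add]
    · intro z hz; simp
    · intro z hz; simp
  -- (B) total count
  have hsumfib : ∑ b : ZMod N, fib b = L := by
    rw [← ZMod.card L, ← Finset.card_univ]
    exact (Finset.card_eq_sum_card_fiberwise (f := φ) (t := univ)
      (fun z _ => mem_univ (φ z))).symm
  have hNfib : N * fib 0 = L := by
    calc N * fib 0 = ∑ _b : ZMod N, fib 0 := by
          rw [Finset.sum_const, Finset.card_univ, ZMod.card, smul_eq_mul]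
      _ = ∑ b : ZMod N, fib b := by
          exact Finset.sum_congr rfl fun b _ => (hfibconst b).symm
      _ = L := hsumfib
  have hfib0 : 0 < fib 0 := by
    rcases Nat.eq_zero_or_pos (fib 0) with h | h
    · rw [h, Nat.mul_zero] at hNfib; omega
    · exact h
  -- (D) partition of a fiber by the covering classes
  have hpart : ∀ b, fib b = ∑ j : Fin k, cnt j b := by
    intro b
    have hex : ∀ z : ZMod L, ∃ j : Fin k, (n j : ℤ) ∣ (z.val : ℤ) - a j :=
      fun z => (hcover _).exists
    choose cfun hcfun using hex
    have huniq : ∀ (z : ZMod L) (j : Fin k), (n j : ℤ) ∣ (z.val : ℤ) - a j → cfun z = j := by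
      intro z j hj
      exact ((hcover _).unique (hcfun z) hj)
    rw [hfib]
    simp only []
    rw [Finset.card_eq_sum_card_fiberwise (f := cfun) (t := univ) (fun z _ => mem_univ _)]
    refine Finset.sum_congr rfl fun j _ => ?_
    rw [Finset.filter_filter]
    congr 1
    apply Finset.filter_congr
    intro z _
    constructor
    · rintro ⟨h1, h2⟩
      exact ⟨h1, h2 ▸ hcfun z⟩
    · rintro ⟨h1, h2⟩
      exact ⟨h1, huniq z j h2⟩
  -- cast helper
  have hcast : ∀ z : ZMod L, ((z.val : ℤ) : ZMod N) = φ z := by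
    intro z
    rw [Int.cast_natCast, ZMod.natCast_val, hφ, ZMod.castHom_apply]
  -- (F) classes with modulus N
  have hScnt : ∀ (b : ZMod N) (j : Fin k), n j = N →
      cnt j b = if ((a j : ℤ) : ZMod N) = b then fib 0 else 0 := by
    intro b j hj
    have hiff : ∀ z : ZMod L, ((n j : ℤ) ∣ (z.val : ℤ) - a j) ↔ φ z = ((a j : ℤ) : ZMod N) := by
      intro z
      rw [hj, ← hcast z]
      rw [eq_comm, ZMod.intCast_eq_intCast_iff, Int.modEq_iff_dvd]
    by_cases hab : ((a j : ℤ) : ZMod N) = b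
    · rw [if_pos hab, hcnt]
      simp only []
      rw [← hfibconst b, hfib]
      congr 1
      apply Finset.filter_congr
      intro z _
      simp only [hiff z, hab, and_self]
    · rw [if_neg hab, hcnt]
      simp only []
      rw [Finset.card_eq_zero, Finset.eq_empty_iff_forall_notMem]
      intro z hz
      simp only [mem_filter, mem_univ, true_and, hiff z] at hz
      exact hab (hz.2.symm.trans hz.1)
  -- (H) master identity
  have hmaster : ∀ b, fN b * fib 0 + ∑ j ∈ univ.filter (fun j => ¬ n j = N), cnt j b
      = fib 0 := by
    intro b
    have h1 : ∑ j ∈ univ.filter (fun j => n j = N), cnt j b = fN b * fib 0 := by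
      rw [Finset.sum_congr rfl (fun j hj => hScnt b j (mem_filter.1 hj).2)]
      rw [← Finset.sum_filter, Finset.sum_const, smul_eq_mul, Finset.filter_filter, hfN]
    have h2 := hpart b
    rw [← Finset.sum_filter_add_sum_filter_not univ (fun j => n j = N)
      (fun j => cnt j b), h1, hfibconst b] at h2
    omega
  -- (I) periodicity of cnt
  have hshift : ∀ (j : Fin k) (b : ZMod N) (s : ℤ), (n j : ℤ) ∣ s →
      cnt j (b + ((s : ℤ) : ZMod N)) = cnt j b := by
    intro j b s hnjs
    have hvaldiff : ∀ (z : ZMod L) (u : ℤ),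
        (n j : ℤ) ∣ ((z + ((u : ℤ) : ZMod L)).val : ℤ) - ((z.val : ℤ) + u) := by
      intro z u
      have hL : ((L : ℕ) : ℤ) ∣ ((z + ((u : ℤ) : ZMod L)).val : ℤ) - ((z.val : ℤ) + u) := by
        rw [← ZMod.intCast_zmod_eq_zero_iff_dvd]
        push_cast
        rw [ZMod.natCast_val, ZMod.natCast_val, ZMod.cast_id, ZMod.cast_id]
        ring
      exact dvd_trans (Int.natCast_dvd_natCast.2 (hjL j)) hL
    obtain ⟨γ, hγ⟩ := hnjs
    apply Finset.card_bij' (i := fun z _ => z - ((s : ℤ) : ZMod L))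
      (j := fun z _ => z + ((s : ℤ) : ZMod L))
    · intro z hz
      simp only [hcnt, mem_filter, mem_univ, true_and] at hz ⊢
      obtain ⟨h1, h2⟩ := hz
      constructor
      · rw [map_sub, h1, show φ (((s : ℤ) : ZMod L)) = ((s : ℤ) : ZMod N) from map_intCast φ s]
        ring
      · have h3 := hvaldiff z (-s)
        rw [show z + ((-s : ℤ) : ZMod L) = z - ((s : ℤ) : ZMod L) by push_cast; ring] at h3
        obtain ⟨α, hα⟩ := h3
        obtain ⟨β, hβ⟩ := h2
        exact ⟨α + β - γ, by linear_combination hα + hβ - hγ⟩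
    · intro z hz
      simp only [hcnt, mem_filter, mem_univ, true_and] at hz ⊢
      obtain ⟨h1, h2⟩ := hz
      constructor
      · rw [map_add, h1, show φ (((s : ℤ) : ZMod L)) = ((s : ℤ) : ZMod N) from map_intCast φ s]
      · have h3 := hvaldiff z s
        obtain ⟨α, hα⟩ := h3
        obtain ⟨β, hβ⟩ := h2
        exact ⟨α + β + γ, by linear_combination hα + hβ + hγ⟩
    · intro z _; ring
    · intro z _; ring
  have hper : ∀ (j : Fin k) (b : ZMod N) (m : ℕ),
      cnt j (b + ((m * Nat.gcd N (n j) : ℕ) : ZMod N)) = cnt j b := by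
    intro j b m
    have hbez := Nat.gcd_eq_gcd_ab N (n j)
    set s : ℤ := (m : ℤ) * ((n j : ℤ) * Nat.gcdB N (n j)) with hs
    have h1 : (n j : ℤ) ∣ s := ⟨(m : ℤ) * Nat.gcdB N (n j), by rw [hs]; ring⟩
    have h2 : ((m * Nat.gcd N (n j) : ℕ) : ZMod N) = ((s : ℤ) : ZMod N) := by
      have hdvd : (N : ℤ) ∣ s - ((m * Nat.gcd N (n j) : ℕ) : ℤ) := by
        refine ⟨-((m : ℤ) * Nat.gcdA N (n j)), ?_⟩
        push_cast
        rw [hs]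
        linear_combination (-(m : ℤ)) * hbez
      calc ((m * Nat.gcd N (n j) : ℕ) : ZMod N)
          = (((m * Nat.gcd N (n j) : ℕ) : ℤ) : ZMod N) := by push_cast; ring
        _ = ((s : ℤ) : ZMod N) := by
            rw [ZMod.intCast_eq_intCast_iff, Int.modEq_iff_dvd]
            exact hdvd
    rw [h2, hshift j b s h1]
  -- nonempty T
  set T : Finset (Fin k) := univ.filter (fun j => ¬ n j = N) with hT
  have hTne : T.Nonempty := by
    obtain ⟨i₀, j₀, hij⟩ := hne
    by_cases h : n i₀ = N
    · exact ⟨j₀, mem_filter.2 ⟨mem_univ _, fun h' => hij (h.trans h'.symm)⟩⟩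
    · exact ⟨i₀, mem_filter.2 ⟨mem_univ _, h⟩⟩
  obtain ⟨j₁, hj₁T⟩ := hTne
  -- apply the key lemma
  set q : Fin k → ZMod N → ℚ := fun j b =>
    (if j = j₁ then 1 else 0) - (cnt j b : ℚ) / (fib 0 : ℚ) with hqdef
  set f : ZMod N → ℤ := fun b => (fN b : ℤ) with hfdef
  have hfib0Q : ((fib 0 : ℕ) : ℚ) ≠ 0 := by exact_mod_cast hfib0.ne'
  have hg : ∀ j ∈ T, Nat.gcd N (n j) ∣ N := fun j _ => Nat.gcd_dvd_left _ _
  have hq : ∀ j ∈ T, ∀ (x : ZMod N) (m : ℕ),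
      q j (x + ((m * Nat.gcd N (n j) : ℕ) : ZMod N)) = q j x := by
    intro j _ x m
    simp only [hqdef]
    rw [hper j x m]
  have hfq : ∀ x, ((f x : ℤ) : ℚ) = ∑ j ∈ T, q j x := by
    intro x
    simp only [hqdef, hfdef]
    rw [Finset.sum_sub_distrib]
    rw [Finset.sum_ite_eq' T j₁ (fun _ => (1 : ℚ)), if_pos hj₁T]
    rw [← Finset.sum_div]
    have h3 := hmaster x
    rw [hT]
    have h4 : ((fN x : ℕ) : ℚ) * (fib 0 : ℚ) + ∑ j ∈ univ.filter (fun j => ¬ n j = N),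
        ((cnt j x : ℕ) : ℚ) = (fib 0 : ℚ) := by
      exact_mod_cast congrArg (fun m : ℕ => (m : ℚ)) h3
    push_cast at h4 ⊢
    field_simp
    linarith
  have hf0 : f ≠ 0 := by
    intro hfe
    have hb : (1 : ℕ) ≤ fN (((a i : ℤ) : ZMod N)) := by
      rw [hfN]
      refine Finset.card_pos.2 ⟨i, ?_⟩
      simp [hN]
    have := congrFun hfe (((a i : ℤ) : ZMod N))
    simp only [hfdef, Pi.zero_apply] at this
    omega
  obtain ⟨j, hjT, hGle⟩ := key T.card T le_rfl N hNz (fun j => Nat.gcd N (n j)) hg q hq f hfq hf0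
  -- identify the sum with the multiplicity
  have hsumf : ∑ x : ZMod N, (f x).natAbs = (univ.filter (fun j : Fin k => n j = N)).card := by
    have h1 : ∀ x, (f x).natAbs = fN x := fun x => Int.natAbs_natCast _
    rw [Finset.sum_congr rfl fun x _ => h1 x]
    rw [Finset.card_eq_sum_card_fiberwise
      (f := fun j : Fin k => ((a j : ℤ) : ZMod N)) (t := univ) (fun z _ => mem_univ _)]
    refine Finset.sum_congr rfl fun b _ => ?_
    rw [hfN, Finset.filter_filter]
  have hcardeq : Nat.card {j : Fin k // n j = n i} = (univ.filter (fun j : Fin k => n j = N)).card := by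
    rw [Nat.card_eq_fintype_card, Fintype.card_subtype]
  rw [hcardeq]
  refine le_trans (Nat.sInf_le ?_) (le_trans hGle (le_of_eq hsumf))
  exact ⟨j, (mem_filter.1 hjT).2, rfl⟩
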